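/- ∫₀^∞ z R(x,y,z) dz = x and ∫₀^∞ z³ R(x,y,z) dz = x(x² + 3y² + 12π²), where R(x,y,z) = (1/2)H(x+y,z) + (1/2)H(x−y,z). -/

import Mathlib

set_option maxHeartbeats 1000000

open Real MeasureTheory Set Filter Topology

/-- The kernel `H(x,y) = (1/(4π))(1/cosh((x−y)/4) − 1/cosh((x+y)/4))`. -/
noncomputable def Hker (x y : ℝ) : ℝ :=
  (1 / (4 * Real.pi)) *
    (1 / Real.cosh ((x - y) / 4) - 1 / Real.cosh ((x + y) / 4))

/-- The kernel `R(x,y,z) = (1/2)H(x+y,z) + (1/2)H(x−y,z)`. -/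
noncomputable def Rker (x y z : ℝ) : ℝ :=
  (1 / 2) * Hker (x + y) z + (1 / 2) * Hker (x - y) z

/-- The basic even kernel `u ↦ 1/cosh(u/4)`. -/
noncomputable def fK (u : ℝ) : ℝ := 1 / Real.cosh (u / 4)

lemma fK_even (u : ℝ) : fK (-u) = fK u := by
  simp [fK, neg_div, Real.cosh_neg]

lemma fK_cont : Continuous fK :=
  continuous_const.div (Real.continuous_cosh.comp (continuous_id.div_const 4))
    fun x => (Real.cosh_pos (x / 4)).ne'

lemma fK_nonneg (u : ℝ) : 0 ≤ fK u :=
  le_of_lt (div_pos one_pos (Real.cosh_pos _))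

lemma fK_le (u : ℝ) : fK u ≤ 2 * Real.exp (-(4⁻¹ * |u|)) := by
  have h1 : Real.exp (|u| / 4) / 2 ≤ Real.cosh (|u| / 4) := by
    rw [Real.cosh_eq]
    have := (Real.exp_pos (-(|u| / 4))).le
    linarith
  have h2 : Real.cosh (u / 4) = Real.cosh (|u| / 4) := by
    rcases abs_choice u with h | h
    · rw [h]
    · rw [h, neg_div, Real.cosh_neg]
  have h3 : (0 : ℝ) < Real.exp (|u| / 4) / 2 := by positivity
  calc fK u = 1 / Real.cosh (|u| / 4) := by rw [fK, h2]
    _ ≤ 1 / (Real.exp (|u| / 4) / 2) := by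
        apply one_div_le_one_div_of_le h3 h1
    _ = 2 * Real.exp (-(4⁻¹ * |u|)) := by
        rw [one_div_div, Real.exp_neg, show 4⁻¹ * |u| = |u| / 4 by ring, div_eq_mul_inv]

/-- Integrability of `uᵏ·exp(-u/4)`-type bounds on `(0,∞)`. -/
lemma integrableOn_pow_exp (k : ℕ) :
    IntegrableOn (fun u : ℝ => u ^ k * Real.exp (-(4⁻¹ * u))) (Ioi 0) := by
  have h := integrableOn_rpow_mul_exp_neg_mul_rpow
    (p := 1) (s := (k : ℝ)) (b := 4⁻¹)
    (lt_of_lt_of_le neg_one_lt_zero (Nat.cast_nonneg k)) one_pos (by norm_num)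
  refine h.congr_fun (fun u hu => ?_) measurableSet_Ioi
  dsimp only; rw [Real.rpow_one, Real.rpow_natCast, neg_mul]

/-- `uᵏ/cosh(u/4)` is integrable on `(0,∞)`. -/
lemma integrableOn_pow_fK_Ioi (k : ℕ) :
    IntegrableOn (fun u : ℝ => u ^ k * fK u) (Ioi 0) := by
  refine Integrable.mono' (((integrableOn_pow_exp k).const_mul 2)) ?_ ?_
  · exact ((continuous_pow k).mul fK_cont).aestronglyMeasurable
  · filter_upwards [ae_restrict_mem measurableSet_Ioi] with u hu
    have hu' : (0 : ℝ) < u := hu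
    rw [Real.norm_eq_abs, abs_mul, abs_pow, abs_of_pos hu',
      abs_of_nonneg (fK_nonneg u)]
    calc u ^ k * fK u ≤ u ^ k * (2 * Real.exp (-(4⁻¹ * |u|))) := by
          exact mul_le_mul_of_nonneg_left (fK_le u) (by positivity)
      _ = 2 * (u ^ k * Real.exp (-(4⁻¹ * u))) := by
          rw [abs_of_pos hu']; ring

/-- `uᵏ/cosh(u/4)` is integrable on `ℝ`. -/
lemma integrable_pow_fK (k : ℕ) :
    Integrable (fun u : ℝ => u ^ k * fK u) := by
  have hIic : IntegrableOn (fun u : ℝ => u ^ k * fK u) (Iic 0) := by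
    rw [← Measure.map_neg_eq_self (volume : Measure ℝ)]
    have m : MeasurableEmbedding fun x : ℝ => -x :=
      (Homeomorph.neg ℝ).measurableEmbedding
    rw [m.integrableOn_map_iff]
    simp only [Function.comp_def, neg_preimage, neg_Iic, neg_zero]
    have h1 : IntegrableOn (fun x : ℝ => (-1 : ℝ) ^ k * (x ^ k * fK x)) (Ici 0) :=
      (Iff.mpr integrableOn_Ici_iff_integrableOn_Ioi (integrableOn_pow_fK_Ioi k)).const_mul _
    refine IntegrableOn.congr_fun h1 (fun x _ => ?_) measurableSet_Ici
    rw [fK_even, neg_pow]; ring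
  rw [← integrableOn_univ, ← Iic_union_Ioi (a := (0:ℝ))]
  exact hIic.union (integrableOn_pow_fK_Ioi k)

/-- Integral of an even function over `ℝ`. -/
lemma integral_even {φ : ℝ → ℝ} (hφ : ∀ u, φ (-u) = φ u) :
    (∫ u, φ u) = 2 * ∫ u in Ioi (0:ℝ), φ u := by
  rw [← integral_comp_abs (f := φ)]
  congr 1; funext u
  rcases abs_choice u with h | h
  · rw [h]
  · rw [h, hφ]

/-- Integral of an odd function over `ℝ` vanishes. -/
lemma integral_odd {φ : ℝ → ℝ} (hφ : ∀ u, φ (-u) = -φ u) :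
    (∫ u, φ u) = 0 := by
  have h := integral_neg_eq_self φ (volume : Measure ℝ)
  simp_rw [hφ] at h
  rw [integral_neg] at h
  linarith

/-- `sinh` tends to `+∞` at `+∞`. -/
lemma tendsto_sinh_atTop : Tendsto Real.sinh atTop atTop := by
  apply tendsto_atTop_mono' _ _ tendsto_id
  filter_upwards [eventually_ge_atTop (0:ℝ)] with x hx
  exact Real.self_le_sinh_iff.mpr hx

/-- The integral `∫_ℝ 1/cosh(u/4) du = 4π`. -/
lemma integral_fK : (∫ u, fK u) = 4 * π := by
  have key : (∫ u in Ioi (0:ℝ), fK u) = 2 * π := by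
    have hF : ∀ x : ℝ, HasDerivAt (fun u : ℝ => 4 * Real.arctan (Real.sinh (u / 4)))
        (fK x) x := by
      intro x
      have h1 : HasDerivAt (fun u : ℝ => u / 4) (1 / 4) x := by
        simpa using (hasDerivAt_id x).div_const 4
      have h2 : HasDerivAt (fun u : ℝ => Real.sinh (u / 4))
          (Real.cosh (x / 4) * (1 / 4)) x := (Real.hasDerivAt_sinh _).comp x h1
      have h3 : HasDerivAt (fun u : ℝ => Real.arctan (Real.sinh (u / 4)))
          (1 / (1 + Real.sinh (x / 4) ^ 2) * (Real.cosh (x / 4) * (1 / 4))) x :=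
        (Real.hasDerivAt_arctan _).comp x h2
      have h4 := h3.const_mul (4 : ℝ)
      refine h4.congr_deriv (Eq.symm ?_)
      have hc : Real.cosh (x / 4) ^ 2 = Real.sinh (x / 4) ^ 2 + 1 := Real.cosh_sq _
      have hcpos : (0 : ℝ) < Real.cosh (x / 4) := Real.cosh_pos _
      rw [fK]
      field_simp
      nlinarith [hcpos]
    have hlim : Tendsto (fun u : ℝ => 4 * Real.arctan (Real.sinh (u / 4))) atTop
        (𝓝 (4 * (π / 2))) := by
      apply Tendsto.const_mul
      apply (Real.tendsto_arctan_atTop.mono_right nhdsWithin_le_nhds).comp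
      exact tendsto_sinh_atTop.comp (tendsto_id.atTop_div_const (by norm_num))
    have := integral_Ioi_of_hasDerivAt_of_tendsto
      (f := fun u : ℝ => 4 * Real.arctan (Real.sinh (u / 4))) (f' := fK) (a := 0)
      (hF 0).continuousAt.continuousWithinAt (fun x _ => hF x)
      (integrableOn_pow_fK_Ioi 0 |>.congr_fun (fun x _ => by simp) measurableSet_Ioi)
      hlim
    rw [this]
    norm_num [Real.sinh_zero, Real.arctan_zero]
    ring
  have h0 := integral_even fK_even
  rw [h0, key]; ring

/-- `∫ t in Ioi 0, t^2 * exp (-(c*t)) = 2 / c^3` for `c > 0`. -/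
lemma integral_sq_exp {c : ℝ} (hc : 0 < c) :
    (∫ t in Ioi (0:ℝ), t ^ 2 * Real.exp (-(c * t))) = 2 / c ^ 3 := by
  have h := Real.integral_rpow_mul_exp_neg_mul_Ioi (a := 3) (r := c) (by norm_num) hc
  have h2 : (∫ t in Ioi (0:ℝ), t ^ ((3:ℝ) - 1) * Real.exp (-(c * t)))
      = ∫ t in Ioi (0:ℝ), t ^ 2 * Real.exp (-(c * t)) := by
    refine setIntegral_congr_fun measurableSet_Ioi (fun t ht => ?_)
    rw [show (3:ℝ) - 1 = ((2:ℕ) : ℝ) by norm_num, Real.rpow_natCast]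
  rw [h2] at h
  rw [h]
  have hG : Real.Gamma 3 = 2 := by
    rw [show (3:ℝ) = ((2:ℕ):ℝ) + 1 by norm_num, Real.Gamma_nat_eq_factorial]
    norm_num
  rw [hG, show (3:ℝ) = ((3:ℕ):ℝ) by norm_num, Real.rpow_natCast, div_pow, one_pow]
  ring

/-- β(3): `∑ (-1)^n/(2n+1)^3 = π^3/32`. -/
lemma hasSum_beta_three :
    HasSum (fun n : ℕ => (-1 : ℝ) ^ n / (2 * n + 1) ^ 3) (π ^ 3 / 32) := by
  have H := hasSum_L_function_mod_four_eval_three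
  have hinj : Function.Injective (fun n : ℕ => 2 * n + 1) := by
    intro a b h; dsimp only at h; omega
  have h0 : ∀ m ∉ Set.range (fun n : ℕ => 2 * n + 1),
      (1 : ℝ) / (m : ℝ) ^ 3 * Real.sin (π * m / 2) = 0 := by
    intro m hm
    have hjm : ∃ j, m = 2 * j := by
      rcases Nat.even_or_odd m with he | ho
      · obtain ⟨j, hj⟩ := he
        exact ⟨j, by omega⟩
      · obtain ⟨k, hk⟩ := ho
        exact absurd ⟨k, by dsimp only; omega⟩ hm
    obtain ⟨j, rfl⟩ := hjm
    have hval : π * ((2 * j : ℕ) : ℝ) / 2 = (j : ℝ) * π := by push_cast; ring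
    rw [hval, Real.sin_nat_mul_pi, mul_zero]
  rw [← hinj.hasSum_iff h0] at H
  have hfun : (fun n : ℕ => (-1 : ℝ) ^ n / (2 * n + 1) ^ 3)
      = (fun m : ℕ => (1 : ℝ) / (m : ℝ) ^ 3 * Real.sin (π * m / 2)) ∘
        (fun n : ℕ => 2 * n + 1) := by
    funext n
    simp only [Function.comp_apply]
    have h1 : (π * ((2 * n + 1 : ℕ) : ℝ) / 2) = (n : ℝ) * π + π / 2 := by
      push_cast; ring
    have h2 : Real.sin ((n : ℝ) * π + π / 2) = (-1 : ℝ) ^ n := by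
      rw [Real.sin_add, Real.sin_nat_mul_pi, Real.sin_pi_div_two, Real.cos_pi_div_two]
      have h3 := Real.cos_nat_mul_pi_sub 0 n
      rw [sub_zero, Real.cos_zero, mul_one] at h3
      rw [h3]; ring
    rw [h1, h2]
    push_cast
    ring
  rw [hfun]
  exact H

/-- The integral `∫_ℝ u^2/cosh(u/4) du = 16π³`. -/
lemma integral_sq_fK : (∫ u, u ^ 2 * fK u) = 16 * π ^ 3 := by
  have hev : ∀ u : ℝ, (-u) ^ 2 * fK (-u) = u ^ 2 * fK u := by
    intro u; rw [fK_even, neg_pow]; ring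
  rw [integral_even hev]
  have key : (∫ u in Ioi (0:ℝ), u ^ 2 * fK u) = 8 * π ^ 3 := by
    set F : ℕ → ℝ → ℝ := fun n u => 2 * u ^ 2 * (-1 : ℝ) ^ n *
      Real.exp (-((2 * n + 1) / 4 * u)) with hFdef
    have hc : ∀ n : ℕ, (0 : ℝ) < (2 * n + 1) / 4 := by
      intro n; positivity
    have hFbase : ∀ n : ℕ, IntegrableOn
        (fun u : ℝ => u ^ 2 * Real.exp (-((2 * n + 1) / 4 * u))) (Ioi 0) := by
      intro n
      have h := integrableOn_rpow_mul_exp_neg_mul_rpow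
        (p := 1) (s := ((2:ℕ) : ℝ)) (b := (2 * n + 1) / 4) (by norm_num) one_pos (hc n)
      refine IntegrableOn.congr_fun h (fun u hu => ?_) measurableSet_Ioi
      rw [Real.rpow_one, Real.rpow_natCast, neg_mul]
    have hFint : ∀ n : ℕ, Integrable (F n) (volume.restrict (Ioi 0)) := by
      intro n
      have h1 : IntegrableOn (fun u : ℝ =>
          (2 * (-1 : ℝ) ^ n) * (u ^ 2 * Real.exp (-((2 * n + 1) / 4 * u)))) (Ioi 0) :=
        (hFbase n).const_mul _
      refine IntegrableOn.congr_fun h1 (fun u hu => ?_) measurableSet_Ioi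
      rw [hFdef]; ring
    have hFval : ∀ n : ℕ, (∫ u in Ioi (0:ℝ), F n u)
        = (-1 : ℝ) ^ n * (256 / (2 * n + 1) ^ 3) := by
      intro n
      have h1 : (∫ u in Ioi (0:ℝ), F n u)
          = (2 * (-1 : ℝ) ^ n) * ∫ u in Ioi (0:ℝ),
              u ^ 2 * Real.exp (-((2 * n + 1) / 4 * u)) := by
        rw [← integral_const_mul]
        refine setIntegral_congr_fun measurableSet_Ioi (fun u hu => ?_)
        rw [hFdef]; ring
      rw [h1, integral_sq_exp (hc n)]
      have hne : ((2:ℝ) * n + 1) ≠ 0 := by positivity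
      field_simp
      ring
    have hFnorm : ∀ n : ℕ, (∫ u in Ioi (0:ℝ), ‖F n u‖)
        = 256 / (2 * n + 1) ^ 3 := by
      intro n
      have h1 : (∫ u in Ioi (0:ℝ), ‖F n u‖)
          = 2 * ∫ u in Ioi (0:ℝ), u ^ 2 * Real.exp (-((2 * n + 1) / 4 * u)) := by
        rw [← integral_const_mul]
        refine setIntegral_congr_fun measurableSet_Ioi (fun u hu => ?_)
        rw [hFdef, Real.norm_eq_abs, abs_mul, abs_mul, abs_pow, abs_neg, abs_one,
          one_pow, mul_one, Real.abs_exp, abs_mul, abs_pow, abs_of_nonneg (le_of_lt (show (0:ℝ) < u from hu)),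
          abs_two]
        ring
      rw [h1, integral_sq_exp (hc n)]
      have hne : ((2:ℝ) * n + 1) ≠ 0 := by positivity
      field_simp
      ring
    have hsummable : Summable (fun n : ℕ => ∫ u in Ioi (0:ℝ), ‖F n u‖) := by
      simp_rw [hFnorm]
      have hg : Summable (fun n : ℕ => 256 / ((n : ℝ) + 1) ^ 3) := by
        apply Summable.mul_left
        have hs := (Real.summable_one_div_nat_pow (p := 3)).mpr (by norm_num)
        have h2 := (summable_nat_add_iff (f := fun n : ℕ => 1 / (n : ℝ) ^ 3) 1).mpr hs
        refine h2.congr (fun n => ?_)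
        push_cast
        rw [one_div]
      refine Summable.of_nonneg_of_le (fun n => by positivity) (fun n => ?_) hg
      have h1 : ((n : ℝ) + 1) ^ 3 ≤ (2 * n + 1) ^ 3 := by
        apply pow_le_pow_left₀ (by positivity)
        push_cast; linarith [Nat.cast_nonneg (α := ℝ) n]
      apply div_le_div_of_nonneg_left (by norm_num) (by positivity) h1
    have hpt : ∀ u ∈ Ioi (0:ℝ), (∑' n, F n u) = u ^ 2 * fK u := by
      intro u hu
      have hu' : (0:ℝ) < u := hu
      have hr : ‖-Real.exp (-(u / 2))‖ < 1 := by
        rw [norm_neg, Real.norm_eq_abs, Real.abs_exp]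
        exact Real.exp_lt_one_iff.mpr (by linarith)
      have hgeo := tsum_geometric_of_norm_lt_one hr
      have hterm : ∀ n : ℕ, F n u
          = (2 * u ^ 2 * Real.exp (-(u / 4))) * (-Real.exp (-(u / 2))) ^ n := by
        intro n
        simp only [hFdef]
        rw [neg_pow (Real.exp (-(u/2))), ← Real.exp_nat_mul,
          show -((2 * (n:ℝ) + 1) / 4 * u) = (n : ℝ) * -(u / 2) + -(u / 4) by ring,
          Real.exp_add]
        ring
      calc (∑' n, F n u)
          = ∑' n, (2 * u ^ 2 * Real.exp (-(u / 4))) * (-Real.exp (-(u / 2))) ^ n := by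
            exact tsum_congr hterm
        _ = (2 * u ^ 2 * Real.exp (-(u / 4))) * (1 - -Real.exp (-(u / 2)))⁻¹ := by
            rw [tsum_mul_left, hgeo]
        _ = u ^ 2 * fK u := by
            rw [fK, Real.cosh_eq, sub_neg_eq_add]
            have e2 : Real.exp (-(u/4)) * Real.exp (-(u/4)) = Real.exp (-(u/2)) := by
              rw [← Real.exp_add]; congr 1; ring
            have e3 : Real.exp (-(u/4)) * Real.exp (u/4) = 1 := by
              rw [← Real.exp_add, show -(u/4) + u/4 = 0 by ring, Real.exp_zero]
            have hp1 : (0:ℝ) < 1 + Real.exp (-(u/2)) := by positivity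
            have hp2 : (0:ℝ) < Real.exp (u/4) + Real.exp (-(u/4)) := by positivity
            field_simp
            simp only [show Real.exp (-u/4) = Real.exp (u * (-1/4)) from by congr 1; ring,
              show Real.exp (u/4) = Real.exp (u * (1/4)) from by congr 1; ring,
              show Real.exp (-u/2) = Real.exp (u * (-1/2)) from by congr 1; ring,
              show Real.exp (-(u/4)) = Real.exp (u * (-1/4)) from by congr 1; ring,
              show Real.exp (-(u/2)) = Real.exp (u * (-1/2)) from by congr 1; ring]
            have e2' : Real.exp (u * (-1/4)) * Real.exp (u * (-1/4))
                = Real.exp (u * (-1/2)) := by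
              rw [← Real.exp_add]; congr 1; ring
            have e3' : Real.exp (u * (-1/4)) * Real.exp (u * (1/4)) = 1 := by
              rw [← Real.exp_add, show u * (-1/4) + u * (1/4) = 0 by ring, Real.exp_zero]
            linear_combination e2' + e3'
    have hmeas : ∀ n : ℕ, AEStronglyMeasurable (F n) (volume.restrict (Ioi 0)) :=
      fun n => (hFint n).aestronglyMeasurable
    have hswap := integral_tsum_of_summable_integral_norm hFint hsummable
    have h2 : (∫ u in Ioi (0:ℝ), ∑' n, F n u) = ∫ u in Ioi (0:ℝ), u ^ 2 * fK u :=
      setIntegral_congr_fun measurableSet_Ioi hpt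
    rw [h2] at hswap
    rw [← hswap]
    simp_rw [hFval]
    calc (∑' n : ℕ, (-1:ℝ) ^ n * (256 / (2 * n + 1) ^ 3))
        = ∑' n : ℕ, 256 * ((-1:ℝ) ^ n / (2 * n + 1) ^ 3) := tsum_congr fun n => by ring
      _ = 256 * (π ^ 3 / 32) := by rw [tsum_mul_left, hasSum_beta_three.tsum_eq]
      _ = 8 * π ^ 3 := by ring
  rw [key]; ring

/-- `(u+b)^k · fK u` is integrable on `ℝ`. -/
lemma integrable_shift_pow_fK (b : ℝ) (k : ℕ) :
    Integrable (fun u : ℝ => (u + b) ^ k * fK u) := by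
  have h : (fun u : ℝ => (u + b) ^ k * fK u)
      = fun u : ℝ => ∑ i ∈ Finset.range (k + 1),
          (u ^ i * fK u) * (b ^ (k - i) * (k.choose i)) := by
    funext u
    rw [add_pow, Finset.sum_mul]
    refine Finset.sum_congr rfl (fun i hi => ?_)
    ring
  rw [h]
  apply integrable_finset_sum
  intro i _
  exact (integrable_pow_fK i).mul_const _

lemma integrable_pow_fK_sub (a : ℝ) (k : ℕ) :
    Integrable (fun z : ℝ => z ^ k * fK (z - a)) := by
  have h := (integrable_shift_pow_fK a k).comp_sub_right a
  have e : (fun t : ℝ => (t - a + a) ^ k * fK (t - a))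
      = fun z : ℝ => z ^ k * fK (z - a) := by
    funext t; rw [show t - a + a = t by ring]
  rwa [e] at h

lemma integrable_pow_fK_add (a : ℝ) (k : ℕ) :
    Integrable (fun z : ℝ => z ^ k * fK (z + a)) := by
  have h := integrable_pow_fK_sub (-a) k
  simpa [sub_neg_eq_add] using h

/-- Key reduction: for odd `k`, the half-line integral of
`z^k (fK(z-a) - fK(z+a))` equals a full-line integral. -/
lemma integral_Ioi_odd_kernel (a : ℝ) (k : ℕ) (hk : Odd k) :
    (∫ z in Set.Ioi (0:ℝ), z ^ k * (fK (z - a) - fK (z + a)))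
      = ∫ u, (u + a) ^ k * fK u := by
  set G : ℝ → ℝ := fun u => u ^ k * fK (u - a) with hG
  have hGint : Integrable G := integrable_pow_fK_sub a k
  have hG2int : Integrable (fun z : ℝ => z ^ k * fK (z + a)) := integrable_pow_fK_add a k
  have step1 : (∫ z in Set.Ioi (0:ℝ), z ^ k * (fK (z - a) - fK (z + a)))
      = (∫ z in Set.Ioi (0:ℝ), G z) - ∫ z in Set.Ioi (0:ℝ), z ^ k * fK (z + a) := by
    rw [← integral_sub hGint.integrableOn hG2int.integrableOn]
    refine setIntegral_congr_fun measurableSet_Ioi (fun z _ => ?_)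
    rw [hG]; dsimp only; ring
  have step2 : (∫ z in Set.Ioi (0:ℝ), z ^ k * fK (z + a))
      = - ∫ z in Set.Iic (0:ℝ), G z := by
    have h1 : ∀ z : ℝ, z ^ k * fK (z + a) = -G (-z) := by
      intro z
      rw [hG]; dsimp only
      rw [show -z - a = -(z + a) by ring, fK_even, hk.neg_pow]
      ring
    calc (∫ z in Set.Ioi (0:ℝ), z ^ k * fK (z + a))
        = ∫ z in Set.Ioi (0:ℝ), -G (-z) :=
          setIntegral_congr_fun measurableSet_Ioi (fun z _ => h1 z)
      _ = - ∫ z in Set.Ioi (0:ℝ), G (-z) := by rw [integral_neg]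
      _ = - ∫ z in Set.Iic (0:ℝ), G z := by rw [integral_comp_neg_Ioi, neg_zero]
  rw [step1, step2, sub_neg_eq_add, add_comm,
    intervalIntegral.integral_Iic_add_Ioi hGint.integrableOn hGint.integrableOn]
  rw [← integral_sub_right_eq_self (fun u : ℝ => (u + a) ^ k * fK u) a]
  congr 1
  funext t
  rw [hG]; dsimp only; rw [show t - a + a = t by ring]

lemma Hker_eq (a z : ℝ) :
    Hker a z = (1 / (4 * π)) * (fK (z - a) - fK (z + a)) := by
  rw [Hker, show z - a = -(a - z) by ring, fK_even, show z + a = a + z by ring]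
  rfl

lemma integral_Hker_one (a : ℝ) :
    (∫ z in Set.Ioi (0:ℝ), z ^ 1 * Hker a z) = a := by
  have h1 : (∫ z in Set.Ioi (0:ℝ), z ^ 1 * Hker a z)
      = (1 / (4 * π)) * ∫ z in Set.Ioi (0:ℝ), z ^ 1 * (fK (z - a) - fK (z + a)) := by
    rw [← integral_const_mul]
    refine setIntegral_congr_fun measurableSet_Ioi (fun z _ => ?_)
    rw [Hker_eq]; ring
  rw [h1, integral_Ioi_odd_kernel a 1 (by norm_num)]
  have h2 : (fun u : ℝ => (u + a) ^ 1 * fK u)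
      = fun u : ℝ => (u ^ 1 * fK u) + a * (u ^ 0 * fK u) := by
    funext u; ring
  rw [h2, integral_add (integrable_pow_fK 1) ((integrable_pow_fK 0).const_mul a),
    integral_const_mul]
  have h3 : (∫ u : ℝ, u ^ 1 * fK u) = 0 :=
    integral_odd (fun u => by rw [fK_even]; ring)
  have h4 : (∫ u : ℝ, u ^ 0 * fK u) = 4 * π := by
    rw [show (fun u : ℝ => u ^ 0 * fK u) = fK from funext fun u => by
      rw [pow_zero, one_mul]]
    exact integral_fK
  rw [h3, h4, zero_add]
  field_simp

lemma integral_Hker_three (a : ℝ) :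
    (∫ z in Set.Ioi (0:ℝ), z ^ 3 * Hker a z) = a ^ 3 + 12 * π ^ 2 * a := by
  have h1 : (∫ z in Set.Ioi (0:ℝ), z ^ 3 * Hker a z)
      = (1 / (4 * π)) * ∫ z in Set.Ioi (0:ℝ), z ^ 3 * (fK (z - a) - fK (z + a)) := by
    rw [← integral_const_mul]
    refine setIntegral_congr_fun measurableSet_Ioi (fun z _ => ?_)
    rw [Hker_eq]; ring
  rw [h1, integral_Ioi_odd_kernel a 3 (by decide)]
  have h2 : (fun u : ℝ => (u + a) ^ 3 * fK u)
      = fun u : ℝ => ((u ^ 3 * fK u) + (3 * a) * (u ^ 2 * fK u))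
          + ((3 * a ^ 2) * (u ^ 1 * fK u) + (a ^ 3) * (u ^ 0 * fK u)) := by
    funext u; ring
  have iA : Integrable (fun u : ℝ => u ^ 3 * fK u) := integrable_pow_fK 3
  have iB : Integrable (fun u : ℝ => 3 * a * (u ^ 2 * fK u)) :=
    (integrable_pow_fK 2).const_mul _
  have iC : Integrable (fun u : ℝ => 3 * a ^ 2 * (u ^ 1 * fK u)) :=
    (integrable_pow_fK 1).const_mul _
  have iD : Integrable (fun u : ℝ => a ^ 3 * (u ^ 0 * fK u)) :=
    (integrable_pow_fK 0).const_mul _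
  have iAB : Integrable (fun u : ℝ => u ^ 3 * fK u + 3 * a * (u ^ 2 * fK u)) := iA.add iB
  have iCD : Integrable (fun u : ℝ =>
      3 * a ^ 2 * (u ^ 1 * fK u) + a ^ 3 * (u ^ 0 * fK u)) := iC.add iD
  rw [h2, integral_add iAB iCD, integral_add iA iB, integral_add iC iD,
    integral_const_mul, integral_const_mul, integral_const_mul]
  have h3 : (∫ u : ℝ, u ^ 3 * fK u) = 0 :=
    integral_odd (fun u => by rw [fK_even, Odd.neg_pow (by decide)]; ring)
  have h3' : (∫ u : ℝ, u ^ 1 * fK u) = 0 :=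
    integral_odd (fun u => by rw [fK_even]; ring)
  have h4 : (∫ u : ℝ, u ^ 0 * fK u) = 4 * π := by
    rw [show (fun u : ℝ => u ^ 0 * fK u) = fK from funext fun u => by
      rw [pow_zero, one_mul]]
    exact integral_fK
  rw [h3, h3', h4, integral_sq_fK]
  have hπ : π ≠ 0 := Real.pi_ne_zero
  field_simp
  ring

/-- `∫₀^∞ z R(x,y,z) dz = x` and `∫₀^∞ z³ R(x,y,z) dz = x(x² + 3y² + 12π²)`. -/
theorem stmt8 (x y : ℝ) :
    (∫ z in Set.Ioi (0 : ℝ), z * Rker x y z) = x ∧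
    (∫ z in Set.Ioi (0 : ℝ), z ^ 3 * Rker x y z) =
      x * (x ^ 2 + 3 * y ^ 2 + 12 * Real.pi ^ 2) := by
  have hint : ∀ (a : ℝ) (k : ℕ),
      IntegrableOn (fun z : ℝ => z ^ k * Hker a z) (Set.Ioi 0) := by
    intro a k
    have h1 : IntegrableOn (fun z : ℝ => (1 / (4 * π)) *
        (z ^ k * fK (z - a) - z ^ k * fK (z + a))) (Set.Ioi 0) :=
      (((integrable_pow_fK_sub a k).integrableOn.sub
        (integrable_pow_fK_add a k).integrableOn).const_mul _)
    refine IntegrableOn.congr_fun h1 (fun z _ => ?_) measurableSet_Ioi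
    rw [Hker_eq]; ring
  constructor
  · have e : (∫ z in Set.Ioi (0:ℝ), z * Rker x y z)
        = (1/2) * (∫ z in Set.Ioi (0:ℝ), z ^ 1 * Hker (x+y) z)
          + (1/2) * (∫ z in Set.Ioi (0:ℝ), z ^ 1 * Hker (x-y) z) := by
      rw [← integral_const_mul, ← integral_const_mul,
        ← integral_add ((hint (x+y) 1).const_mul _) ((hint (x-y) 1).const_mul _)]
      refine setIntegral_congr_fun measurableSet_Ioi (fun z _ => ?_)
      rw [Rker]; ring
    rw [e, integral_Hker_one, integral_Hker_one]; ring
  · have e : (∫ z in Set.Ioi (0:ℝ), z ^ 3 * Rker x y z)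
        = (1/2) * (∫ z in Set.Ioi (0:ℝ), z ^ 3 * Hker (x+y) z)
          + (1/2) * (∫ z in Set.Ioi (0:ℝ), z ^ 3 * Hker (x-y) z) := by
      rw [← integral_const_mul, ← integral_const_mul,
        ← integral_add ((hint (x+y) 3).const_mul _) ((hint (x-y) 3).const_mul _)]
      refine setIntegral_congr_fun measurableSet_Ioi (fun z _ => ?_)
      rw [Rker]; ring
    rw [e, integral_Hker_three, integral_Hker_three]; ring
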